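/- In a chordal graph, every connected component of the subgraph induced by a feasible support is a clique. -/

import Mathlib

open Finset

namespace Stmt13Aux

open SimpleGraph

universe u

variable {V : Type u} {G : SimpleGraph V}

/-- Chordality hypothesis, in the form given in the main theorem. -/
def ChordalHyp (G : SimpleGraph V) : Prop :=
  ∀ (v : V) (w : G.Walk v v), w.IsCycle → 4 ≤ w.length →
    ∃ a b : V, a ∈ w.support ∧ b ∈ w.support ∧ G.Adj a b ∧ s(a, b) ∉ w.edges

/-- A simplicial vertex: its neighborhood is a clique. -/
def Simpl (G : SimpleGraph V) (v : V) : Prop :=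
  ∀ a b : V, G.Adj v a → G.Adj v b → a ≠ b → G.Adj a b

/-- Reachability by a walk avoiding a set of vertices. -/
def RA (G : SimpleGraph V) (S : Set V) (u v : V) : Prop :=
  ∃ p : G.Walk u v, ∀ z ∈ p.support, z ∉ S

lemma RA.refl {S : Set V} {u : V} (h : u ∉ S) : RA G S u u :=
  ⟨.nil, by simp [h]⟩

lemma RA.symm {S : Set V} {u v : V} (h : RA G S u v) : RA G S v u := by
  obtain ⟨p, hp⟩ := h
  exact ⟨p.reverse, by simpa [SimpleGraph.Walk.support_reverse] using hp⟩

lemma RA.trans {S : Set V} {u v w : V} (h : RA G S u v) (h' : RA G S v w) : RA G S u w := by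
  obtain ⟨p, hp⟩ := h; obtain ⟨q, hq⟩ := h'
  refine ⟨p.append q, fun z hz => ?_⟩
  rw [SimpleGraph.Walk.mem_support_append_iff] at hz
  exact hz.elim (hp z) (hq z)

lemma RA.notMem {S : Set V} {u v : V} (h : RA G S u v) : v ∉ S := by
  obtain ⟨p, hp⟩ := h; exact hp v p.end_mem_support

lemma RA.notMem' {S : Set V} {u v : V} (h : RA G S u v) : u ∉ S := by
  obtain ⟨p, hp⟩ := h; exact hp u p.start_mem_support

lemma RA.step {S : Set V} {u v w : V} (h : RA G S u v) (ha : G.Adj v w) (hw : w ∉ S) :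
    RA G S u w := by
  obtain ⟨p, hp⟩ := h
  refine ⟨p.concat ha, fun z hz => ?_⟩
  rw [SimpleGraph.Walk.support_concat, List.mem_append] at hz
  rcases hz with hz | hz
  · exact hp z hz
  · rw [List.mem_singleton] at hz; subst hz; exact hw

lemma edge_of_length_one {x y : V} (u : G.Walk x y) (h : u.length = 1) :
    s(x, y) ∈ u.edges := by
  cases u with
  | nil => simp at h
  | cons h' u' =>
    have : u'.length = 0 := by simpa using h
    have := SimpleGraph.Walk.eq_of_length_eq_zero this
    subst this
    simp

/-- Splice lemma: a "chord" on a walk gives a strictly shorter walk with smaller support. -/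
lemma splice [DecidableEq V] {s t x y : V} (p : G.Walk s t)
    (hx : x ∈ p.support) (hy : y ∈ p.support) (hadj : G.Adj x y) (he : s(x, y) ∉ p.edges) :
    ∃ q : G.Walk s t, q.length < p.length ∧ ∀ z ∈ q.support, z ∈ p.support := by
  -- split p at x
  have hsplit := p.take_spec hx
  set p1 := p.takeUntil x hx with hp1
  set p2 := p.dropUntil x hx with hp2
  have hlen : p1.length + p2.length = p.length := by
    rw [← hsplit, SimpleGraph.Walk.length_append]
  have hysplit : y ∈ p1.support ∨ y ∈ p2.support := by
    rw [← hsplit] at hy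
    rcases (SimpleGraph.Walk.mem_support_append_iff _ _).1 hy with h | h
    · exact Or.inl h
    · exact Or.inr h
  rcases hysplit with hy1 | hy2
  · -- y on the first part : s → y, edge y-x, then p2 : x → t
    refine ⟨(p1.takeUntil y hy1).append (SimpleGraph.Walk.cons hadj.symm p2), ?_, ?_⟩
    · rw [SimpleGraph.Walk.length_append, SimpleGraph.Walk.length_cons]
      -- p1.length = (p1.takeUntil y).length + (p1.dropUntil y).length
      have h1 := p1.take_spec hy1
      have hlen1 : (p1.takeUntil y hy1).length + (p1.dropUntil y hy1).length = p1.length := by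
        rw [← SimpleGraph.Walk.length_append, h1]
      have hge2 : 2 ≤ (p1.dropUntil y hy1).length := by
        by_contra hlt
        push_neg at hlt
        interval_cases h : (p1.dropUntil y hy1).length
        · exact G.ne_of_adj hadj.symm (SimpleGraph.Walk.eq_of_length_eq_zero h)
        · have := edge_of_length_one _ h
          have : s(y, x) ∈ p.edges := by
            have h2 : (p1.dropUntil y hy1).edges ⊆ p1.edges :=
              SimpleGraph.Walk.edges_dropUntil_subset _ _
            have h3 : p1.edges ⊆ p.edges := by
              rw [← hsplit]; intro e hep
              rw [SimpleGraph.Walk.edges_append, List.mem_append]; exact Or.inl hep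
            exact h3 (h2 this)
          rw [Sym2.eq_swap] at this
          exact he this
      omega
    · intro z hz
      rw [SimpleGraph.Walk.mem_support_append_iff] at hz
      rcases hz with hz | hz
      · exact (p.support_takeUntil_subset hx) ((p1.support_takeUntil_subset hy1) hz)
      · rw [SimpleGraph.Walk.support_cons, List.mem_cons] at hz
        rcases hz with rfl | hz
        · exact (p.support_takeUntil_subset hx) hy1
        · exact (p.support_dropUntil_subset hx) hz
  · -- y on the second part : take p1 : s → x, edge x-y, then rest of p2 from y
    refine ⟨p1.append (SimpleGraph.Walk.cons hadj (p2.dropUntil y hy2)), ?_, ?_⟩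
    · rw [SimpleGraph.Walk.length_append, SimpleGraph.Walk.length_cons]
      have h1 := p2.take_spec hy2
      have hlen1 : (p2.takeUntil y hy2).length + (p2.dropUntil y hy2).length = p2.length := by
        rw [← SimpleGraph.Walk.length_append, h1]
      have hge2 : 2 ≤ (p2.takeUntil y hy2).length := by
        by_contra hlt
        push_neg at hlt
        interval_cases h : (p2.takeUntil y hy2).length
        · exact G.ne_of_adj hadj (SimpleGraph.Walk.eq_of_length_eq_zero h)
        · have := edge_of_length_one _ h
          have : s(x, y) ∈ p.edges := by
            have h2 : (p2.takeUntil y hy2).edges ⊆ p2.edges :=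
              SimpleGraph.Walk.edges_takeUntil_subset _ _
            have h3 : p2.edges ⊆ p.edges := by
              rw [← hsplit]; intro e hep
              rw [SimpleGraph.Walk.edges_append, List.mem_append]; exact Or.inr hep
            exact h3 (h2 this)
          exact he this
      omega
    · intro z hz
      rw [SimpleGraph.Walk.mem_support_append_iff] at hz
      rcases hz with hz | hz
      · exact (p.support_takeUntil_subset hx) hz
      · rw [SimpleGraph.Walk.support_cons, List.mem_cons] at hz
        rcases hz with rfl | hz
        · exact (p.support_dropUntil_subset hx) p2.start_mem_support
        · exact (p.support_dropUntil_subset hx) ((p2.support_dropUntil_subset hy2) hz)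

/-- A minimal-length walk satisfying a support-monotone property; it is a path. -/
lemma exists_min_path {s t : V} (A : V → Prop)
    (hne : ∃ p : G.Walk s t, ∀ z ∈ p.support, A z) :
    ∃ p : G.Walk s t, (∀ z ∈ p.support, A z) ∧ p.IsPath ∧
      ∀ q : G.Walk s t, (∀ z ∈ q.support, A z) → p.length ≤ q.length := by
  classical
  obtain ⟨p0, hp0⟩ := hne
  have hex : ∃ n, ∃ p : G.Walk s t, (∀ z ∈ p.support, A z) ∧ p.length = n :=
    ⟨p0.length, p0, hp0, rfl⟩
  obtain ⟨p, hp, hplen⟩ := Nat.find_spec hex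
  refine ⟨p.bypass, fun z hz => hp z (p.support_bypass_subset hz), p.bypass_isPath, ?_⟩
  intro q hq
  have h1 : p.bypass.length ≤ p.length := p.length_bypass_le
  have h2 : Nat.find hex ≤ q.length := Nat.find_le ⟨q, hq, rfl⟩
  omega

/-- Chordality transfers to induced subgraphs. -/
lemma ChordalHyp.induce (hch : ChordalHyp G) (T : Set V) : ChordalHyp (G.induce T) := by
  intro v w hwc hwl
  have hinj : Function.Injective (SimpleGraph.Embedding.induce T (G := G)).toHom := by
    intro a b hab
    exact Subtype.ext hab
  have hc : (w.map (SimpleGraph.Embedding.induce T (G := G)).toHom).IsCycle := hwc.map hinj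
  have hl : 4 ≤ (w.map (SimpleGraph.Embedding.induce T (G := G)).toHom).length := by
    rwa [SimpleGraph.Walk.length_map]
  obtain ⟨a, b, ha, hb, hadj, hne⟩ := hch _ _ hc hl
  rw [SimpleGraph.Walk.support_map, List.mem_map] at ha hb
  obtain ⟨a', ha', rfl⟩ := ha
  obtain ⟨b', hb', rfl⟩ := hb
  refine ⟨a', b', ha', hb', ?_, ?_⟩
  · exact hadj
  · intro hmem
    apply hne
    rw [SimpleGraph.Walk.edges_map, List.mem_map]
    exact ⟨s(a', b'), hmem, rfl⟩

/-- Transfer of simpliciality from an induced subgraph containing the closed neighborhood. -/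
lemma simpl_of_induce {T : Set V} {σ : V} (hσ : σ ∈ T) (hnb : ∀ z, G.Adj σ z → z ∈ T)
    (h : Simpl (G.induce T) ⟨σ, hσ⟩) : Simpl G σ := by
  intro a b ha hb hab
  have ha' : (G.induce T).Adj ⟨σ, hσ⟩ ⟨a, hnb a ha⟩ := ha
  have hb' : (G.induce T).Adj ⟨σ, hσ⟩ ⟨b, hnb b hb⟩ := hb
  have : (G.induce T).Adj ⟨a, hnb a ha⟩ ⟨b, hnb b hb⟩ :=
    h _ _ ha' hb' (fun hc => hab (congrArg Subtype.val hc))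
  exact this

/-- key separator-clique construction -/
lemma sep_clique [DecidableEq V] (hch : ChordalHyp G) {s t : V} (hst : s ≠ t)
    (A B : V → Prop) (hdisj : ∀ z, A z → B z → False)
    (hmix : ∀ x y, A x → B y → ¬ G.Adj x y)
    (hA : ∃ p : G.Walk s t, ∀ z ∈ p.support, z = s ∨ z = t ∨ A z)
    (hB : ∃ p : G.Walk t s, ∀ z ∈ p.support, z = s ∨ z = t ∨ B z) : G.Adj s t := by
  by_contra hadjst
  obtain ⟨P1, hQ1, hP1path, hP1min⟩ := exists_min_path _ hA
  obtain ⟨P2, hQ2, hP2path, hP2min⟩ := exists_min_path _ hB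
  -- no chords on P1 and P2
  have hnc1 : ∀ x y, x ∈ P1.support → y ∈ P1.support → G.Adj x y → s(x, y) ∈ P1.edges := by
    intro x y hx hy hxy
    by_contra hne
    obtain ⟨q, hqlen, hqsup⟩ := splice P1 hx hy hxy hne
    have := hP1min q (fun z hz => hQ1 z (hqsup z hz))
    omega
  have hnc2 : ∀ x y, x ∈ P2.support → y ∈ P2.support → G.Adj x y → s(x, y) ∈ P2.edges := by
    intro x y hx hy hxy
    by_contra hne
    obtain ⟨q, hqlen, hqsup⟩ := splice P2 hx hy hxy hne
    have := hP2min q (fun z hz => hQ2 z (hqsup z hz))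
    omega
  -- lengths at least 2
  have hlen1 : 2 ≤ P1.length := by
    by_contra h
    push_neg at h
    interval_cases h' : P1.length
    · exact hst (SimpleGraph.Walk.eq_of_length_eq_zero h')
    · exact hadjst (P1.adj_of_mem_edges (edge_of_length_one _ h'))
  have hlen2 : 2 ≤ P2.length := by
    by_contra h
    push_neg at h
    interval_cases h' : P2.length
    · exact hst (SimpleGraph.Walk.eq_of_length_eq_zero h').symm
    · exact hadjst (P2.adj_of_mem_edges (edge_of_length_one _ h')).symm
  -- supports intersect only in s, t
  have hkey : ∀ z, z ∈ P1.support → z ∈ P2.support → z = s ∨ z = t := by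
    intro z h1 h2
    rcases hQ1 z h1 with rfl | rfl | hAz
    · exact Or.inl rfl
    · exact Or.inr rfl
    rcases hQ2 z h2 with rfl | rfl | hBz
    · exact Or.inl rfl
    · exact Or.inr rfl
    exact absurd (hdisj z hAz hBz) not_false
  set C : G.Walk s s := P1.append P2 with hC
  have hCedges : C.edges = P1.edges ++ P2.edges := SimpleGraph.Walk.edges_append _ _
  have hCsup : ∀ z, z ∈ C.support → z ∈ P1.support ∨ z ∈ P2.support := by
    intro z hz
    exact (SimpleGraph.Walk.mem_support_append_iff _ _).1 hz
  have hCcyc : C.IsCycle := by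
    constructor
    · constructor
      · constructor
        rw [hCedges]
        rw [List.nodup_append]
        refine ⟨hP1path.isTrail.edges_nodup, hP2path.isTrail.edges_nodup, ?_⟩
        intro e he1 e' he2 hee'
        rw [← hee'] at he2
        clear hee'
        induction e with
        | h c d =>
          have hc1 := P1.fst_mem_support_of_mem_edges he1
          have hd1 := P1.snd_mem_support_of_mem_edges he1
          have hc2 := P2.fst_mem_support_of_mem_edges he2
          have hd2 := P2.snd_mem_support_of_mem_edges he2
          have hcd : G.Adj c d := P1.adj_of_mem_edges he1
          rcases hkey c hc1 hc2 with rfl | rfl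
          · rcases hkey d hd1 hd2 with rfl | rfl
            · exact hcd.ne rfl
            · exact hadjst hcd
          · rcases hkey d hd1 hd2 with rfl | rfl
            · exact hadjst hcd.symm
            · exact hcd.ne rfl
      · intro h
        have := congrArg SimpleGraph.Walk.length h
        rw [hC, SimpleGraph.Walk.length_append] at this
        simp only [SimpleGraph.Walk.length_nil] at this
        omega
    · have h1 : C.support = s :: (P1.support.tail ++ P2.support.tail) := by
        rw [hC, SimpleGraph.Walk.support_append]
        rw [SimpleGraph.Walk.support_eq_cons P1]
        rfl
      rw [h1]
      simp only [List.tail_cons]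
      rw [List.nodup_append]
      refine ⟨hP1path.support_nodup.tail, hP2path.support_nodup.tail, ?_⟩
      intro z hz1 z' hz2 hzz'
      rw [← hzz'] at hz2
      have hz1' : z ∈ P1.support := List.mem_of_mem_tail hz1
      have hz2' : z ∈ P2.support := List.mem_of_mem_tail hz2
      rcases hkey z hz1' hz2' with rfl | rfl
      · have : P1.support.Nodup := hP1path.support_nodup
        rw [SimpleGraph.Walk.support_eq_cons P1] at this
        exact (List.nodup_cons.1 this).1 hz1
      · have : P2.support.Nodup := hP2path.support_nodup
        rw [SimpleGraph.Walk.support_eq_cons P2] at this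
        exact (List.nodup_cons.1 this).1 hz2
  have hClen : 4 ≤ C.length := by
    rw [hC, SimpleGraph.Walk.length_append]
    omega
  obtain ⟨x, y, hx, hy, hxy, hne⟩ := hch s C hCcyc hClen
  have hnotP1 : ∀ w, w ∉ P1.support → w ∈ P2.support → B w := by
    intro w hw1 hw2
    rcases hQ2 w hw2 with rfl | rfl | h
    · exact absurd P1.start_mem_support hw1
    · exact absurd P1.end_mem_support hw1
    · exact h
  have hnotP2 : ∀ w, w ∉ P2.support → w ∈ P1.support → A w := by
    intro w hw2 hw1
    rcases hQ1 w hw1 with rfl | rfl | h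
    · exact absurd P2.end_mem_support hw2
    · exact absurd P2.start_mem_support hw2
    · exact h
  have hneltP1 : s(x, y) ∉ P1.edges := fun h => hne (by rw [hCedges]; exact List.mem_append_left _ h)
  have hneltP2 : s(x, y) ∉ P2.edges := fun h => hne (by rw [hCedges]; exact List.mem_append_right _ h)
  by_cases hx1 : x ∈ P1.support <;> by_cases hy1 : y ∈ P1.support
  · exact hneltP1 (hnc1 x y hx1 hy1 hxy)
  · -- y ∈ P2 only
    have hy2 : y ∈ P2.support := (hCsup y hy).resolve_left hy1
    by_cases hx2 : x ∈ P2.support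
    · exact hneltP2 (hnc2 x y hx2 hy2 hxy)
    · exact hmix x y (hnotP2 x hx2 hx1) (hnotP1 y hy1 hy2) hxy
  · have hx2 : x ∈ P2.support := (hCsup x hx).resolve_left hx1
    by_cases hy2 : y ∈ P2.support
    · exact hneltP2 (hnc2 x y hx2 hy2 hxy)
    · exact hmix y x (hnotP2 y hy2 hy1) (hnotP1 x hx1 hx2) hxy.symm
  · have hx2 : x ∈ P2.support := (hCsup x hx).resolve_left hx1
    have hy2 : y ∈ P2.support := (hCsup y hy).resolve_left hy1
    exact hneltP2 (hnc2 x y hx2 hy2 hxy)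
lemma nbr_side [DecidableEq V] {S : Set V} {c d s : V} (p : G.Walk c d) (hp : p.IsPath)
    (hs : s ∈ p.support) (hcs : c ≠ s) (havoid : ∀ z ∈ p.support, z ∉ S \ {s}) :
    ∃ u, G.Adj s u ∧ RA G S c u := by
  set q : G.Walk c s := p.takeUntil s hs with hq
  have hqpath : q.IsPath := hp.takeUntil hs
  have hqrnotnil : ¬ q.reverse.Nil := by
    rw [SimpleGraph.Walk.nil_iff_length_eq, SimpleGraph.Walk.length_reverse]
    intro h
    exact hcs (SimpleGraph.Walk.eq_of_length_eq_zero h)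
  obtain ⟨u, hadj, r, hr⟩ := SimpleGraph.Walk.not_nil_iff.1 hqrnotnil
  have hrsup : q.reverse.support = s :: r.support := by rw [hr, SimpleGraph.Walk.support_cons]
  have hnodup : (s :: r.support).Nodup := by
    rw [← hrsup, SimpleGraph.Walk.support_reverse]
    exact List.nodup_reverse.2 hqpath.support_nodup
  have hsnotr : s ∉ r.support := (List.nodup_cons.1 hnodup).1
  refine ⟨u, hadj, r.reverse, ?_⟩
  intro z hz
  rw [SimpleGraph.Walk.support_reverse, List.mem_reverse] at hz
  have hz1 : z ∈ q.reverse.support := by rw [hrsup]; exact List.mem_cons_of_mem _ hz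
  have hz2 : z ∈ p.support := by
    rw [SimpleGraph.Walk.support_reverse, List.mem_reverse] at hz1
    exact p.support_takeUntil_subset hs hz1
  have := havoid z hz2
  intro hzS
  apply this
  refine ⟨hzS, ?_⟩
  intro hzs
  rw [Set.mem_singleton_iff] at hzs
  subst hzs
  exact hsnotr hz

/-- One side of the separator argument: produce a simplicial vertex on the x-side. -/
lemma side {n : ℕ} [Fintype V] [DecidableEq V]
    (IH : ∀ (W : Type u) [Fintype W] [DecidableEq W] (H : SimpleGraph W),
      Fintype.card W ≤ n → ChordalHyp H →
      (∀ u v : W, u ≠ v → H.Adj u v) ∨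
        ∃ s t : W, s ≠ t ∧ ¬H.Adj s t ∧ Simpl H s ∧ Simpl H t)
    (hch : ChordalHyp G) (hcard : Fintype.card V ≤ n + 1)
    (S : Finset V) (hclique : ∀ s ∈ S, ∀ t ∈ S, s ≠ t → G.Adj s t)
    {x y : V} (hx : x ∉ (S : Set V)) (hyS : y ∉ (S : Set V)) (hxy : ¬ RA G (S : Set V) x y) :
    ∃ σ : V, RA G (S : Set V) x σ ∧ Simpl G σ := by
  classical
  set T : Set V := {w | RA G (S : Set V) x w ∨ w ∈ (S : Set V)} with hT
  have hyT : y ∉ T := by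
    intro h
    rcases h with h | h
    · exact hxy h
    · exact hyS h
  have hxT : x ∈ T := Or.inl (RA.refl hx)
  have hcardT : Fintype.card ↥T ≤ n := by
    have : Fintype.card ↥T < Fintype.card V := Fintype.card_subtype_lt (x := y) hyT
    omega
  have hchT : ChordalHyp (G.induce T) := hch.induce T
  -- closure of T under neighbors of RA-vertices
  have hclosure : ∀ σ : V, RA G (S : Set V) x σ → ∀ z, G.Adj σ z → z ∈ T := by
    intro σ hσ z hz
    by_cases hzS : z ∈ (S : Set V)
    · exact Or.inr hzS
    · exact Or.inl (hσ.step hz hzS)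
  rcases IH ↥T (G.induce T) hcardT hchT with hcomp | ⟨σ1, σ2, hne, hnadj, hs1, hs2⟩
  · refine ⟨x, RA.refl hx, ?_⟩
    exact simpl_of_induce hxT (hclosure x (RA.refl hx)) (fun a b ha hb hab => hcomp a b hab)
  · -- at most one of σ1, σ2 lies in S
    have hnotboth : ¬ ((σ1 : V) ∈ (S : Set V) ∧ (σ2 : V) ∈ (S : Set V)) := by
      rintro ⟨h1, h2⟩
      have hne' : (σ1 : V) ≠ (σ2 : V) := fun h => hne (Subtype.ext h)
      exact hnadj (hclique _ h1 _ h2 hne')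
    have hpick : ∃ (σ : ↥T), RA G (S : Set V) x ↑σ ∧ Simpl (G.induce T) σ := by
      by_cases h1 : (σ1 : V) ∈ (S : Set V)
      · have h2 : (σ2 : V) ∉ (S : Set V) := fun h => hnotboth ⟨h1, h⟩
        exact ⟨σ2, σ2.2.resolve_right h2, hs2⟩
      · exact ⟨σ1, σ1.2.resolve_right h1, hs1⟩
    obtain ⟨σ, hσRA, hσsimpl⟩ := hpick
    refine ⟨↑σ, hσRA, ?_⟩
    exact simpl_of_induce σ.2 (hclosure ↑σ hσRA) hσsimpl

/-- Dirac's theorem: a chordal graph is complete or has two nonadjacent simplicial vertices. -/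
lemma dirac : ∀ (n : ℕ) (V : Type u) [Fintype V] [DecidableEq V] (G : SimpleGraph V),
    Fintype.card V ≤ n → ChordalHyp G →
    (∀ u v : V, u ≠ v → G.Adj u v) ∨
      ∃ s t : V, s ≠ t ∧ ¬G.Adj s t ∧ Simpl G s ∧ Simpl G t := by
  intro n
  induction n with
  | zero =>
    intro V _ _ G hcard _
    left
    have : IsEmpty V := Fintype.card_eq_zero_iff.1 (Nat.le_zero.1 hcard)
    exact fun u => (this.false u).elim
  | succ n IH =>
    intro V _ _ G hcard hch
    classical
    by_cases hcomp : ∀ u v : V, u ≠ v → G.Adj u v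
    · exact Or.inl hcomp
    push_neg at hcomp
    obtain ⟨a, b, hab, hnadj⟩ := hcomp
    -- separators exist
    set sep : Finset V → Prop :=
      fun S => a ∉ (S : Set V) ∧ b ∉ (S : Set V) ∧ ¬ RA G (S : Set V) a b with hsepdef
    have hsepex : ∃ S, sep S := by
      refine ⟨Finset.univ \ {a, b}, ?_, ?_, ?_⟩
      · simp
      · simp
      · rintro ⟨p, hp⟩
        have hsup : ∀ z ∈ p.support, z = a ∨ z = b := by
          intro z hz
          have := hp z hz
          simp only [Finset.coe_sdiff, Finset.coe_univ, Set.mem_diff, Set.mem_univ,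
            true_and, not_not] at this
          simpa using this
        cases p with
        | nil => exact hab rfl
        | @cons _ z _ h p' =>
          have hz : z ∈ (SimpleGraph.Walk.cons h p').support := by
            rw [SimpleGraph.Walk.support_cons]
            exact List.mem_cons_of_mem _ p'.start_mem_support
          rcases hsup z hz with h1 | h1
          · exact G.loopless.irrefl _ (h1 ▸ h)
          · exact hnadj (h1 ▸ h)
    have hex : ∃ m, ∃ S : Finset V, sep S ∧ S.card = m := by
      obtain ⟨S, hS⟩ := hsepex
      exact ⟨S.card, S, hS, rfl⟩
    obtain ⟨S, hsep, hScard⟩ := Nat.find_spec hex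
    have hmin : ∀ S' : Finset V, sep S' → S.card ≤ S'.card := by
      intro S' h
      rw [hScard]
      exact Nat.find_le ⟨S', h, rfl⟩
    obtain ⟨haS, hbS, hRA⟩ := hsep
    -- every separator vertex has neighbors reachable from both a and b
    have hF5 : ∀ s ∈ S, (∃ u, G.Adj s u ∧ RA G (S : Set V) a u) ∧
        (∃ u, G.Adj s u ∧ RA G (S : Set V) b u) := by
      intro s hsS
      have herase : ¬ sep (S.erase s) := by
        intro h
        have := hmin _ h
        have hlt : (S.erase s).card < S.card := Finset.card_erase_lt_of_mem hsS
        omega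
      have hRAerase : RA G ((S.erase s : Finset V) : Set V) a b := by
        by_contra h
        apply herase
        refine ⟨?_, ?_, h⟩
        · intro hmem; exact haS (Finset.mem_coe.1 (Finset.mem_of_mem_erase hmem))
        · intro hmem; exact hbS (Finset.mem_coe.1 (Finset.mem_of_mem_erase hmem))
      obtain ⟨p, hp⟩ := hRAerase
      set pb := p.bypass with hpb
      have hpbpath : pb.IsPath := p.bypass_isPath
      have hpbavoid : ∀ z ∈ pb.support, z ∉ ((S.erase s : Finset V) : Set V) :=
        fun z hz => hp z (p.support_bypass_subset hz)
      have hpbavoid' : ∀ z ∈ pb.support, z ∉ (S : Set V) \ {s} := by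
        intro z hz
        have := hpbavoid z hz
        rw [Finset.coe_erase] at this
        intro hmem
        exact this ⟨hmem.1, hmem.2⟩
      have hspb : s ∈ pb.support := by
        by_contra h
        apply hRA
        refine ⟨pb, fun z hz => ?_⟩
        intro hzS
        rcases eq_or_ne z s with rfl | hzs
        · exact h hz
        · exact hpbavoid' z hz ⟨hzS, hzs⟩
      have has : a ≠ s := fun h => haS (h ▸ hsS)
      have hbs : b ≠ s := fun h => hbS (h ▸ hsS)
      constructor
      · exact nbr_side pb hpbpath hspb has hpbavoid'
      · have hspb' : s ∈ pb.reverse.support := by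
          rw [SimpleGraph.Walk.support_reverse, List.mem_reverse]; exact hspb
        have : ∀ z ∈ pb.reverse.support, z ∉ (S : Set V) \ {s} := by
          intro z hz
          rw [SimpleGraph.Walk.support_reverse, List.mem_reverse] at hz
          exact hpbavoid' z hz
        exact nbr_side pb.reverse hpbpath.reverse hspb' hbs this
    -- generic walk construction through one side
    have hbuild : ∀ (c s t p q : V), G.Adj s p → G.Adj t q → RA G (S : Set V) c p →
        RA G (S : Set V) c q →
        ∃ w : G.Walk s t, ∀ z ∈ w.support, z = s ∨ z = t ∨ RA G (S : Set V) c z := by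
      intro c s t p q hsp htq hcp hcq
      obtain ⟨w, hw⟩ := hcp.symm.trans hcq
      refine ⟨SimpleGraph.Walk.cons hsp (w.concat htq.symm), ?_⟩
      intro z hz
      rw [SimpleGraph.Walk.support_cons, List.mem_cons] at hz
      rcases hz with rfl | hz
      · exact Or.inl rfl
      rw [SimpleGraph.Walk.support_concat, List.mem_append] at hz
      rcases hz with hz | hz
      · right; right
        exact hcp.trans ⟨w.takeUntil z hz, fun y hy => hw y (w.support_takeUntil_subset hz hy)⟩
      · right; left; simpa using hz
    -- S is a clique
    have hclique : ∀ s ∈ S, ∀ t ∈ S, s ≠ t → G.Adj s t := by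
      intro s hsS t htS hst
      obtain ⟨⟨u1, hu1adj, hu1⟩, ⟨v1, hv1adj, hv1⟩⟩ := hF5 s hsS
      obtain ⟨⟨u2, hu2adj, hu2⟩, ⟨v2, hv2adj, hv2⟩⟩ := hF5 t htS
      apply sep_clique hch hst (RA G (S : Set V) a) (RA G (S : Set V) b)
      · exact fun z hAz hBz => hRA (hAz.trans hBz.symm)
      · intro p q hAp hBq hadj
        exact hRA ((hAp.step hadj hBq.notMem).trans hBq.symm)
      · exact hbuild a s t u1 u2 hu1adj hu2adj hu1 hu2
      · obtain ⟨w2, hw2⟩ := hbuild b t s v2 v1 hv2adj hv1adj hv2 hv1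
        refine ⟨w2, fun z hz => ?_⟩
        rcases hw2 z hz with rfl | rfl | h
        · exact Or.inr (Or.inl rfl)
        · exact Or.inl rfl
        · exact Or.inr (Or.inr h)
    -- two nonadjacent simplicial vertices, one on each side
    obtain ⟨σA, hσA, hσAsimpl⟩ := side IH hch hcard S hclique haS hbS hRA
    have hRA' : ¬ RA G (S : Set V) b a := fun h => hRA h.symm
    obtain ⟨σB, hσB, hσBsimpl⟩ := side IH hch hcard S hclique hbS haS hRA'
    right
    refine ⟨σA, σB, ?_, ?_, hσAsimpl, hσBsimpl⟩
    · rintro rfl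
      exact hRA (hσA.trans hσB.symm)
    · intro hadjAB
      exact hRA ((hσA.step hadjAB hσB.notMem).trans hσB.symm)

lemma exists_simpl [Fintype V] [DecidableEq V] [Nonempty V] (hch : ChordalHyp G) :
    ∃ σ : V, Simpl G σ := by
  rcases dirac (Fintype.card V) V G le_rfl hch with hcomp | ⟨s, _, _, _, hs, _⟩
  · exact ⟨Classical.arbitrary V, fun p q hp hq hne => hcomp p q hne⟩
  · exact ⟨s, hs⟩


end Stmt13Aux


/-- `(Ax)_v` where `A` is the adjacency matrix plus the identity. -/
noncomputable def kkosMass {V : Type*} [Fintype V] [DecidableEq V]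
    (G : SimpleGraph V) [DecidableRel G.Adj] (x : V → ℝ) (v : V) : ℝ :=
  ∑ u, if u = v ∨ G.Adj v u then x u else 0

open Stmt13Aux SimpleGraph

/-- In a chordal graph (every cycle of length at least 4 has a chord), every
connected component of the subgraph induced by a feasible support is a
clique. -/

theorem stmt13 {V : Type*} [Fintype V] [DecidableEq V]
    (G : SimpleGraph V) [DecidableRel G.Adj]
    (hchordal : ∀ (v : V) (w : G.Walk v v), w.IsCycle → 4 ≤ w.length →
      ∃ a b : V, a ∈ w.support ∧ b ∈ w.support ∧ G.Adj a b ∧ s(a, b) ∉ w.edges)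
    (S : Set V) (x : V → ℝ) (hx0 : ∀ v, 0 ≤ x v) (hx1 : ∑ v, x v = 1)
    (hsupp : ∀ v, 0 < x v ↔ v ∈ S)
    (hfeas : ∀ u v : V, G.Adj u v → 0 < x u → 0 < x v →
      kkosMass G x u = kkosMass G x v) :
    ∀ u v : S, (G.induce S).Reachable u v → (u : V) = v ∨ G.Adj u v := by
  classical
  intro u v huv
  set H : SimpleGraph ↥S := G.induce S with hH
  have hchG : ChordalHyp G := hchordal
  set C : Set ↥S := {z | H.Reachable u z} with hC
  have huC : u ∈ C := SimpleGraph.Reachable.refl u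
  have hvC : v ∈ C := huv
  have hCclosed : ∀ z w : ↥S, z ∈ C → H.Adj z w → w ∈ C :=
    fun z w hz hzw => hz.trans hzw.reachable
  have hchH' : ChordalHyp (H.induce C) := (hchG.induce S).induce C
  haveI : Nonempty ↥C := ⟨⟨u, huC⟩⟩
  obtain ⟨σ', hσ'⟩ := exists_simpl hchH'
  set σS : ↥S := (σ' : ↥S) with hσS
  have hσC : σS ∈ C := σ'.2
  have hσsimplH : Simpl H σS := by
    refine simpl_of_induce hσC (fun z hz => hCclosed _ _ hσC hz) ?_
    exact hσ'
  -- the closed-neighborhood-within-support finsets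
  set D : V → Finset V :=
    fun w => (Finset.univ.filter (fun z => z = w ∨ G.Adj w z)).filter (fun z => z ∈ S) with hD
  have hxzero : ∀ z, z ∉ S → x z = 0 := by
    intro z hz
    rcases lt_or_eq_of_le (hx0 z) with h | h
    · exact absurd ((hsupp z).1 h) hz
    · exact h.symm
  have hmass : ∀ w, kkosMass G x w = ∑ z ∈ D w, x z := by
    intro w
    rw [kkosMass, ← Finset.sum_filter]
    refine (Finset.sum_subset (Finset.filter_subset _ _) ?_).symm
    intro z hz hz2
    rw [Finset.mem_filter] at hz2
    push_neg at hz2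
    exact hxzero z (hz2 hz)
  have hDpos : ∀ w z, z ∈ D w → 0 < x z := by
    intro w z hz
    rw [hD, Finset.mem_filter] at hz
    exact (hsupp z).2 hz.2
  have hDmem : ∀ w z, z ∈ D w ↔ (z = w ∨ G.Adj w z) ∧ z ∈ S := by
    intro w z
    rw [hD]
    simp [Finset.mem_filter, and_assoc]
  have hDsub_eq : ∀ p q : V, D p ⊆ D q → kkosMass G x p = kkosMass G x q → D p = D q := by
    intro p q hsub heq
    rw [hmass, hmass] at heq
    by_contra hne
    obtain ⟨z, hzq, hzp⟩ := Finset.exists_of_ssubset (hsub.ssubset_of_ne hne)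
    have := Finset.sum_lt_sum_of_subset hsub hzq hzp (hDpos q z hzq)
      (fun j _ _ => hx0 j)
    exact (ne_of_lt this) heq
  have hnbr : ∀ τ : ↥S, H.Adj σS τ → D ↑σS = D ↑τ := by
    intro τ hadj
    have hGadj : G.Adj ↑σS ↑τ := hadj
    have hsub : D ↑σS ⊆ D ↑τ := by
      intro z hz
      rw [hDmem] at hz ⊢
      obtain ⟨h1, hzS⟩ := hz
      refine ⟨?_, hzS⟩
      rcases h1 with rfl | h1
      · exact Or.inr hGadj.symm
      · have hHζ : H.Adj σS ⟨z, hzS⟩ := h1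
        by_cases hζτ : (⟨z, hzS⟩ : ↥S) = τ
        · left; rw [← hζτ]
        · right; exact (hσsimplH _ _ hHζ hadj hζτ).symm
    exact hDsub_eq _ _ hsub (hfeas _ _ hGadj ((hsupp _).2 σS.2) ((hsupp _).2 τ.2))
  have hstart : ↑σS ∈ D ↑σS := by rw [hDmem]; exact ⟨Or.inl rfl, σS.2⟩
  have hprop : ∀ (z w : ↥S) (p : H.Walk z w), ↑z ∈ D ↑σS → ↑w ∈ D ↑σS := by
    intro z w p
    induction p with
    | nil => exact id
    | @cons zz yy ww hadj p' ih =>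
      intro hz
      apply ih
      rw [hDmem] at hz
      rcases hz.1 with h1 | h1
      · have hzzσ : zz = σS := Subtype.ext h1
        rw [hDmem]
        refine ⟨Or.inr ?_, yy.2⟩
        exact (show H.Adj σS yy from hzzσ ▸ hadj)
      · have hHadj : H.Adj σS zz := h1
        rw [hnbr zz hHadj, hDmem]
        exact ⟨Or.inr hadj, yy.2⟩
  have hreachu : H.Reachable σS u := (show H.Reachable u σS from hσC).symm
  have hreachv : H.Reachable σS v := (show H.Reachable u σS from hσC).symm.trans huv
  have huD : ↑u ∈ D ↑σS := by
    obtain ⟨p⟩ := hreachu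
    exact hprop σS u p hstart
  have hvD : ↑v ∈ D ↑σS := by
    obtain ⟨p⟩ := hreachv
    exact hprop σS v p hstart
  rw [hDmem] at huD hvD
  by_cases huvne : (u : V) = v
  · exact Or.inl huvne
  right
  rcases huD.1 with h1 | h1 <;> rcases hvD.1 with h2 | h2
  · exact absurd (h1.trans h2.symm) huvne
  · rw [h1]; exact h2
  · rw [h2]; exact h1.symm
  · have hu' : H.Adj σS u := h1
    have hv' : H.Adj σS v := h2
    have : H.Adj u v := hσsimplH u v hu' hv' (fun h => huvne (congrArg Subtype.val h))
    exact this
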